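/- Fix n ≥ 1 and d = 2. Assume φ'(t) > 0 for all t ∈ [−1,1] and that tφ'(t) − (1−t²)φ''(t) < 0 for all t ∈ [−1, cos(π/n)). Let the graph W be connected. If X ∈ ℝ^{2×n} with unit-norm columns is critical for f and has negative-semidefinite Hessian, then all columns of X are equal: x_1 = ⋯ = x_n. -/

import Mathlib

open Matrix

noncomputable section

/-- Frobenius inner product `⟨A,B⟩ = ∑ᵢⱼ Aᵢⱼ Bᵢⱼ`. -/
def frob {ι κ : Type*} [Fintype ι] [Fintype κ] (A B : Matrix ι κ ℝ) : ℝ :=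
  ∑ i, ∑ j, A i j * B i j

/-- `ddiag` zeroes out all off-diagonal entries of a square matrix. -/
def ddiag {ι : Type*} [Fintype ι] [DecidableEq ι] (M : Matrix ι ι ℝ) : Matrix ι ι ℝ :=
  Matrix.diagonal fun i => M i i

/-- Graph Laplacian `L(M) = diag(M 1) − M`. -/
def lap {ι : Type*} [Fintype ι] [DecidableEq ι] (M : Matrix ι ι ℝ) : Matrix ι ι ℝ :=
  Matrix.diagonal (fun i => ∑ j, M i j) - M

/-- `X` has unit-norm columns. -/
def unitCols {d : ℕ} {ι : Type*} [Fintype ι] (X : Matrix (Fin d) ι ℝ) : Prop :=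
  ∀ j, ∑ i, X i j ^ 2 = 1

/-- `A = W ⊙ φ'(XᵀX)` (`d1` playing the role of `φ'`). -/
def Amat {d : ℕ} {ι : Type*} [Fintype ι] (W : Matrix ι ι ℝ) (X : Matrix (Fin d) ι ℝ)
    (d1 : ℝ → ℝ) : Matrix ι ι ℝ :=
  Matrix.hadamard W ((Xᵀ * X).map d1)

/-- `S = ddiag(XᵀXA) − A`. -/
def Smat {d : ℕ} {ι : Type*} [Fintype ι] [DecidableEq ι] (W : Matrix ι ι ℝ)
    (X : Matrix (Fin d) ι ℝ) (d1 : ℝ → ℝ) : Matrix ι ι ℝ :=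
  ddiag ((Xᵀ * X) * Amat W X d1) - Amat W X d1

/-- First-order criticality: `X S = 0`, i.e. `X·ddiag(XᵀXA) = XA`
(vanishing Riemannian gradient on the product of spheres). -/
def IsCritical {d : ℕ} {ι : Type*} [Fintype ι] [DecidableEq ι] (W : Matrix ι ι ℝ)
    (X : Matrix (Fin d) ι ℝ) (d1 : ℝ → ℝ) : Prop :=
  X * Smat W X d1 = 0

/-- The Riemannian Hessian quadratic form of `f` at `X` is negative semidefinite:
`−⟨ẊᵀẊ, S⟩ + (1/2)⟨(XᵀẊ + ẊᵀX)^{⊙2}, W ⊙ φ''(XᵀX)⟩ ≤ 0` for all tangent `Ẋ`. -/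
def HessNegSemidef {d : ℕ} {ι : Type*} [Fintype ι] [DecidableEq ι] (W : Matrix ι ι ℝ)
    (X : Matrix (Fin d) ι ℝ) (d1 d2 : ℝ → ℝ) : Prop :=
  ∀ V : Matrix (Fin d) ι ℝ, (∀ j, (Xᵀ * V) j j = 0) →
    -(frob (Vᵀ * V) (Smat W X d1))
      + (1 / 2) * frob ((Xᵀ * V + Vᵀ * X).map fun t => t ^ 2)
          (Matrix.hadamard W ((Xᵀ * X).map d2)) ≤ 0

/-- The graph with an edge `{i,j}` whenever `w_ij > 0` is connected. -/
def ConnectedW {ι : Type*} (W : Matrix ι ι ℝ) : Prop :=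
  (SimpleGraph.fromRel fun i j => 0 < W i j).Connected

/-- `f(Y) = (1/2)⟨W, φ(YᵀY)⟩`. -/
def fval {d : ℕ} {ι : Type*} [Fintype ι] (W : Matrix ι ι ℝ) (φ : ℝ → ℝ)
    (Y : Matrix (Fin d) ι ℝ) : ℝ :=
  (1 / 2) * frob W ((Yᵀ * Y).map φ)

/-- `h(t) = tφ'(t) − (1−t²)φ''(t)`. -/
def hfun (d1 d2 : ℝ → ℝ) (t : ℝ) : ℝ := t * d1 t - (1 - t ^ 2) * d2 t

/-- The matrix `M` with `m_ij = w_ij · h(x_iᵀx_j)`. -/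
def Mmat {d : ℕ} {ι : Type*} [Fintype ι] (W : Matrix ι ι ℝ) (X : Matrix (Fin d) ι ℝ)
    (d1 d2 : ℝ → ℝ) : Matrix ι ι ℝ :=
  Matrix.of fun i j => W i j * hfun d1 d2 ((Xᵀ * X) i j)

/-- The kernel of `L` is exactly `span(1)`. -/
def KernelIsConst {ι : Type*} [Fintype ι] [DecidableEq ι] (L : Matrix ι ι ℝ) : Prop :=
  ∀ α : ι → ℝ, L.mulVec α = 0 ↔ ∃ c : ℝ, ∀ k, α k = c

/-- The regular `n`-gon configuration on the unit circle. -/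
def ngon (n : ℕ) : Matrix (Fin 2) (Fin n) ℝ :=
  Matrix.of fun a j =>
    if a = 0 then Real.cos (2 * Real.pi * (j : ℝ) / (n : ℝ))
    else Real.sin (2 * Real.pi * (j : ℝ) / (n : ℝ))

/-- The log-sum-exp smoothing `φ_{ε,τ}(t) = ε·log(1 + e^{(t−τ)/ε})` of the ReLU. -/
def philse (ε τ : ℝ) : ℝ → ℝ := fun t => ε * Real.log (1 + Real.exp ((t - τ) / ε))

private lemma sum_sq_sym {n : ℕ} (g : Fin n → Fin n → ℝ) (hg : ∀ i j, g i j = g j i)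
    (α : Fin n → ℝ) :
    ∑ i, ∑ j, g i j * (α i - α j)^2 = 2 * ∑ i, ∑ j, g i j * (α i^2 - α i * α j) := by
  have h2 : ∑ i, ∑ j, g i j * (α j^2 - α j * α i)
      = ∑ i, ∑ j, g i j * (α i^2 - α i * α j) := by
    rw [Finset.sum_comm]
    exact Finset.sum_congr rfl fun i _ => Finset.sum_congr rfl fun j _ => by rw [hg]
  have h3 : ∑ i, ∑ j, g i j * (α i - α j)^2
      = ∑ i, ∑ j, (g i j * (α i^2 - α i * α j) + g i j * (α j^2 - α j * α i)) :=
    Finset.sum_congr rfl fun i _ => Finset.sum_congr rfl fun j _ => by ring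
  rw [h3]
  simp only [Finset.sum_add_distrib]
  rw [h2]; ring

private lemma walk_closed {V : Type*} {G : SimpleGraph V} (S : Set V)
    (hS : ∀ a ∈ S, ∀ b, G.Adj a b → b ∈ S) :
    ∀ {u v : V}, G.Walk u v → u ∈ S → v ∈ S := by
  intro u v p
  induction p with
  | nil => exact id
  | cons h q ih => exact fun hu => ih (hS _ hu _ h)

private lemma walk_theta_bound {V : Type*} {G : SimpleGraph V} (θ : V → ℝ) (δ : ℝ)
    (hAdj : ∀ a b, G.Adj a b → |θ a - θ b| ≤ δ) :
    ∀ {u v : V}, (p : G.Walk u v) → |θ u - θ v| ≤ p.length * δ := by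
  intro u v p
  induction p with
  | nil => simp
  | @cons u w v h q ih =>
    calc |θ u - θ v| ≤ |θ u - θ w| + |θ w - θ v| := abs_sub_le _ _ _
    _ ≤ δ + q.length * δ := add_le_add (hAdj _ _ h) ih
    _ = ((q.length + 1 : ℕ) : ℝ) * δ := by push_cast; ring
    _ = ((SimpleGraph.Walk.cons h q).length : ℝ) * δ := by rw [SimpleGraph.Walk.length_cons]

private lemma exists_angle (a b : ℝ) (h : a^2 + b^2 = 1) :
    ∃ ψ : ℝ, 0 ≤ ψ ∧ ψ < 2 * Real.pi ∧ a = Real.cos ψ ∧ b = Real.sin ψ := by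
  set z : ℂ := ⟨a, b⟩ with hz
  have habs : ‖z‖ = 1 := by
    have h1 : ‖z‖ ^ 2 = 1 := by
      rw [Complex.sq_norm, Complex.normSq_mk]; linarith [h]
    nlinarith [norm_nonneg z]
  have hz0 : z ≠ 0 := by
    intro h0; rw [h0] at habs; simp at habs
  have hcos : Real.cos z.arg = a := by
    rw [Complex.cos_arg hz0, habs]; simp [hz]
  have hsin : Real.sin z.arg = b := by
    rw [Complex.sin_arg, habs]; simp [hz]
  obtain ⟨m, hm, -⟩ := existsUnique_add_zsmul_mem_Ico Real.two_pi_pos z.arg 0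
  refine ⟨z.arg + m • (2 * Real.pi), ?_, ?_, ?_, ?_⟩
  · simpa using hm.1
  · simpa using hm.2
  · rw [zsmul_eq_mul, mul_comm (m:ℝ), ← Real.cos_add_int_mul_two_pi z.arg m] at *
    rw [← hcos]; congr 1; push_cast; ring
  · rw [← hsin, zsmul_eq_mul]
    rw [show z.arg + (m:ℝ) * (2*Real.pi) = z.arg + m * (2*Real.pi) by push_cast; ring]
    rw [Real.sin_add_int_mul_two_pi]

private lemma abs_le_of_cos_ge {t δ : ℝ} (hδ0 : 0 < δ) (hδπ : δ ≤ Real.pi)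
    (ht : |t| < 2 * Real.pi - δ) (hcos : Real.cos δ ≤ Real.cos t) : |t| ≤ δ := by
  by_contra hgt
  push_neg at hgt
  have hc : Real.cos |t| = Real.cos t := Real.cos_abs t
  rcases le_or_gt |t| Real.pi with h1 | h1
  · have := Real.strictAntiOn_cos ⟨hδ0.le, hδπ⟩ ⟨le_trans hδ0.le ((le_abs_self δ).trans (le_of_eq (abs_of_pos hδ0))) |>.trans hgt.le, h1⟩ hgt
    linarith
  · have h2 : Real.cos (2*Real.pi - |t|) = Real.cos t := by
      rw [Real.cos_two_pi_sub, hc]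
    have hmem : (2*Real.pi - |t|) ∈ Set.Icc 0 Real.pi := by
      constructor <;> linarith
    have hl : δ < 2*Real.pi - |t| := by linarith
    have := Real.strictAntiOn_cos ⟨hδ0.le, hδπ⟩ hmem hl
    linarith

private lemma sin_nonpos_neg {x : ℝ} (h1 : -Real.pi ≤ x) (h2 : x ≤ 0) : Real.sin x ≤ 0 := by
  have := Real.sin_nonneg_of_nonneg_of_le_pi (x := -x) (by linarith) (by linarith)
  rw [Real.sin_neg] at this; linarith

private lemma eq_zero_of_sin_zero {x : ℝ} (h1 : -Real.pi < x) (h2 : x ≤ 0)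
    (hs : Real.sin x = 0) : x = 0 := by
  rw [Real.sin_eq_zero_iff] at hs
  obtain ⟨m, hm⟩ := hs
  have hπ := Real.pi_pos
  have hm1 : |(m:ℝ)| < 1 := by
    have habs : |(m:ℝ) * Real.pi| < Real.pi := by
      rw [hm, abs_of_nonpos h2]; linarith
    rw [abs_mul, abs_of_pos hπ] at habs
    nlinarith [abs_nonneg ((m:ℝ))]
  have hm0 : m = 0 := by
    have h5 := abs_lt.mp hm1
    have h3 : (-1:ℤ) < m := by exact_mod_cast h5.1
    have h4 : (m:ℤ) < 1 := by exact_mod_cast h5.2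
    omega
  rw [hm0] at hm; simpa using hm.symm

private lemma star_ineq {n : ℕ} (W : Matrix (Fin n) (Fin n) ℝ)
    (hW : ∀ i j, W i j = W j i)
    (d1 d2 : ℝ → ℝ) (X : Matrix (Fin 2) (Fin n) ℝ)
    (hu : ∀ j, X 0 j ^ 2 + X 1 j ^ 2 = 1)
    (hhess : HessNegSemidef W X d1 d2) (α : Fin n → ℝ) :
    0 ≤ ∑ i, ∑ j, W i j * hfun d1 d2 ((Xᵀ * X) i j) * (α i - α j)^2 := by
  have hcc : ∀ i j, (Xᵀ * X) i j = X 0 i * X 0 j + X 1 i * X 1 j := by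
    intro i j; rw [Matrix.mul_apply, Fin.sum_univ_two]; rfl
  set V : Matrix (Fin 2) (Fin n) ℝ :=
    Matrix.of (fun a j => if a = 0 then α j * (-(X 1 j)) else α j * X 0 j) with hVdef
  have hV0 : ∀ j, V 0 j = α j * (-(X 1 j)) := fun j => by simp [hVdef]
  have hV1 : ∀ j, V 1 j = α j * X 0 j := fun j => by
    simp [hVdef, Matrix.of_apply, show (1:Fin 2) ≠ 0 by decide]
  have hXV : ∀ i j, (Xᵀ * V) i j = α j * (X 1 i * X 0 j - X 0 i * X 1 j) := by
    intro i j; rw [Matrix.mul_apply, Fin.sum_univ_two]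
    simp only [Matrix.transpose_apply, hV0, hV1]; ring
  have hVX : ∀ i j, (Vᵀ * X) i j = -(α i) * (X 1 i * X 0 j - X 0 i * X 1 j) := by
    intro i j; rw [Matrix.mul_apply, Fin.sum_univ_two]
    simp only [Matrix.transpose_apply, hV0, hV1]; ring
  have hVV : ∀ i j, (Vᵀ * V) i j = α i * α j * ((Xᵀ * X) i j) := by
    intro i j; rw [Matrix.mul_apply, Fin.sum_univ_two, hcc]
    simp only [Matrix.transpose_apply, hV0, hV1]; ring
  have hdiag1 : ∀ i, (Xᵀ * X) i i = 1 := by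
    intro i; rw [hcc]; linear_combination hu i
  have hA : ∀ i j, Amat W X d1 i j = W i j * d1 ((Xᵀ * X) i j) := by
    intro i j; simp [Amat, Matrix.hadamard_apply, Matrix.map_apply]
  have hcsym : ∀ i j, (Xᵀ * X) i j = (Xᵀ * X) j i := by
    intro i j; rw [hcc, hcc]; ring
  have htang : ∀ j, (Xᵀ * V) j j = 0 := fun j => by rw [hXV]; ring
  have hmain := hhess V htang
  -- evaluate first frobenius term
  have e1 : frob (Vᵀ * V) (Smat W X d1)
      = (1/2) * ∑ i, ∑ j, (W i j * d1 ((Xᵀ*X) i j) * ((Xᵀ*X) i j)) * (α i - α j)^2 := by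
    have step1 : frob (Vᵀ * V) (Smat W X d1)
        = ∑ i, ∑ j, ((W i j * d1 ((Xᵀ*X) i j) * ((Xᵀ*X) i j)) * (α i ^2)
            - (W i j * d1 ((Xᵀ*X) i j) * ((Xᵀ*X) i j)) * (α i * α j)) := by
      unfold frob Smat ddiag
      refine Finset.sum_congr rfl fun i _ => ?_
      simp only [Matrix.sub_apply, Matrix.diagonal_apply, mul_sub]
      rw [Finset.sum_sub_distrib, Finset.sum_sub_distrib]
      congr 1
      · -- ∑ j, (VᵀV) i j * (if i = j then _ else 0) = ∑ j, g i j * α i ^2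
        rw [Finset.sum_congr rfl (fun j _ => by
          rw [show (Vᵀ*V) i j * (if i = j then ((Xᵀ*X) * Amat W X d1) i i else 0)
            = (if i = j then (Vᵀ*V) i i * ((Xᵀ*X) * Amat W X d1) i i else 0) from by
              split <;> simp_all])]
        rw [Finset.sum_ite_eq Finset.univ i
          (fun _ => (Vᵀ*V) i i * ((Xᵀ*X) * Amat W X d1) i i)]
        simp only [Finset.mem_univ, if_true]
        rw [hVV, hdiag1, Matrix.mul_apply, Finset.mul_sum]
        refine Finset.sum_congr rfl fun k _ => ?_
        rw [hA, hW k i, hcsym k i]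
        ring
      · refine Finset.sum_congr rfl fun j _ => ?_
        rw [hVV, hA]; ring
    rw [step1, Finset.sum_congr rfl (fun i _ => Finset.sum_sub_distrib _ _), Finset.sum_sub_distrib]
    rw [show ∑ i, ∑ j, (W i j * d1 ((Xᵀ*X) i j) * ((Xᵀ*X) i j)) * (α i ^2)
          - ∑ i, ∑ j, (W i j * d1 ((Xᵀ*X) i j) * ((Xᵀ*X) i j)) * (α i * α j)
        = ∑ i, ∑ j, (W i j * d1 ((Xᵀ*X) i j) * ((Xᵀ*X) i j)) * (α i ^2 - α i * α j) from by
      rw [← Finset.sum_sub_distrib]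
      refine Finset.sum_congr rfl fun i _ => ?_
      rw [← Finset.sum_sub_distrib]
      exact Finset.sum_congr rfl fun j _ => by ring]
    rw [sum_sq_sym (fun i j => W i j * d1 ((Xᵀ*X) i j) * ((Xᵀ*X) i j))
      (fun i j => by rw [hW i j, hcsym i j]) α]
    ring
  -- evaluate second frobenius term
  have e2 : frob ((Xᵀ * V + Vᵀ * X).map fun t => t ^ 2)
        (Matrix.hadamard W ((Xᵀ * X).map d2))
      = ∑ i, ∑ j, (W i j * d2 ((Xᵀ*X) i j) * (1 - ((Xᵀ*X) i j)^2)) * (α i - α j)^2 := by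
    unfold frob
    refine Finset.sum_congr rfl fun i _ => Finset.sum_congr rfl fun j _ => ?_
    rw [Matrix.map_apply, Matrix.add_apply, hXV, hVX, Matrix.hadamard_apply, Matrix.map_apply]
    have hs2 : (X 1 i * X 0 j - X 0 i * X 1 j)^2 = 1 - ((Xᵀ*X) i j)^2 := by
      rw [hcc]
      have h1 := hu i; have h2 := hu j
      nlinarith [h1, h2]
    linear_combination (W i j * d2 ((Xᵀ*X) i j)) * (α j - α i)^2 * hs2
  rw [e1, e2] at hmain
  have expand : ∑ i, ∑ j, W i j * hfun d1 d2 ((Xᵀ * X) i j) * (α i - α j)^2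
      = ∑ i, ∑ j, (W i j * d1 ((Xᵀ*X) i j) * ((Xᵀ*X) i j)) * (α i - α j)^2
        - ∑ i, ∑ j, (W i j * d2 ((Xᵀ*X) i j) * (1 - ((Xᵀ*X) i j)^2)) * (α i - α j)^2 := by
    rw [← Finset.sum_sub_distrib]
    refine Finset.sum_congr rfl fun i _ => ?_
    rw [← Finset.sum_sub_distrib]
    refine Finset.sum_congr rfl fun j _ => ?_
    unfold hfun; ring
  rw [expand]
  linarith

private lemma crit_eq {n : ℕ} (W : Matrix (Fin n) (Fin n) ℝ) (d1 : ℝ → ℝ)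
    (X : Matrix (Fin 2) (Fin n) ℝ) (hcrit : IsCritical W X d1) (j : Fin n) :
    ∑ k, (X 0 j * X 1 k - X 1 j * X 0 k) * (W k j * d1 ((Xᵀ * X) k j)) = 0 := by
  have hent : ∀ a, ∑ k, X a k * Smat W X d1 k j = 0 := by
    intro a
    have h := congrFun (congrFun hcrit a) j
    rw [Matrix.mul_apply] at h
    simpa using h
  have hcomb : ∑ k, (X 0 j * X 1 k - X 1 j * X 0 k) * Smat W X d1 k j = 0 := by
    have h0 := hent 0; have h1 := hent 1
    calc ∑ k, (X 0 j * X 1 k - X 1 j * X 0 k) * Smat W X d1 k j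
        = X 0 j * ∑ k, X 1 k * Smat W X d1 k j
          - X 1 j * ∑ k, X 0 k * Smat W X d1 k j := by
          rw [Finset.mul_sum, Finset.mul_sum, ← Finset.sum_sub_distrib]
          exact Finset.sum_congr rfl fun k _ => by ring
    _ = 0 := by rw [h0, h1]; ring
  have hsplit : ∑ k, (X 0 j * X 1 k - X 1 j * X 0 k) * Smat W X d1 k j
      = - ∑ k, (X 0 j * X 1 k - X 1 j * X 0 k) * (W k j * d1 ((Xᵀ*X) k j)) := by
    unfold Smat ddiag
    simp only [Matrix.sub_apply, Matrix.diagonal_apply, mul_sub]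
    rw [Finset.sum_sub_distrib]
    have hz : ∑ k, (X 0 j * X 1 k - X 1 j * X 0 k)
        * (if k = j then ((Xᵀ*X) * Amat W X d1) k k else 0) = 0 := by
      rw [Finset.sum_congr rfl (fun k _ => by
        rw [show (X 0 j * X 1 k - X 1 j * X 0 k)
              * (if k = j then ((Xᵀ*X)*Amat W X d1) k k else 0)
            = (if k = j then (X 0 j * X 1 k - X 1 j * X 0 k)
              * ((Xᵀ*X)*Amat W X d1) k k else 0) from by split <;> simp])]
      rw [Finset.sum_ite_eq' Finset.univ j
        (fun k => (X 0 j * X 1 k - X 1 j * X 0 k) * ((Xᵀ*X)*Amat W X d1) k k)]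
      simp
      left; ring
    rw [hz]
    rw [show ∑ k, (X 0 j * X 1 k - X 1 j * X 0 k) * Amat W X d1 k j
        = ∑ k, (X 0 j * X 1 k - X 1 j * X 0 k) * (W k j * d1 ((Xᵀ*X) k j)) from
      Finset.sum_congr rfl fun k _ => by
        simp [Amat, Matrix.hadamard_apply, Matrix.map_apply]]
    ring
  rw [hsplit] at hcomb
  linarith

private lemma conn_closure {V : Type*} {G : SimpleGraph V} (hG : G.Connected) (S : Set V)
    (hS : ∀ a ∈ S, ∀ b, G.Adj a b → b ∈ S) {v0 : V} (h0 : v0 ∈ S) : ∀ v, v ∈ S :=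
  fun v => (hG.preconnected v0 v).elim fun p => walk_closed S hS p h0

/-- Theorem 4, main part: on the circle, if `φ' > 0` and
`tφ'(t) − (1−t²)φ''(t) < 0` for all `t ∈ [−1, cos(π/n))`, and the graph is connected,
then second-order critical points are synchronized. -/
theorem synchronization_circle_large_beta_condition
    {n : ℕ} (hn : 1 ≤ n)
    (W : Matrix (Fin n) (Fin n) ℝ) (hWsymm : W.IsSymm) (hWnonneg : ∀ i j, 0 ≤ W i j)
    (hconn : ConnectedW W)
    (φ d1 d2 : ℝ → ℝ)
    (hder1 : ∀ t ∈ Set.Icc (-1 : ℝ) 1, HasDerivAt φ (d1 t) t)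
    (hder2 : ∀ t ∈ Set.Icc (-1 : ℝ) 1, HasDerivAt d1 (d2 t) t)
    (hd2cont : ContinuousOn d2 (Set.Icc (-1 : ℝ) 1))
    (hd1pos : ∀ t ∈ Set.Icc (-1 : ℝ) 1, 0 < d1 t)
    (hcond : ∀ t : ℝ, -1 ≤ t → t < Real.cos (Real.pi / (n : ℝ)) →
      t * d1 t - (1 - t ^ 2) * d2 t < 0)
    (X : Matrix (Fin 2) (Fin n) ℝ) (hX : unitCols X)
    (hcrit : IsCritical W X d1) (hhess : HessNegSemidef W X d1 d2) :
    ∀ j j' : Fin n, ∀ i, X i j = X i j' := by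
  classical
  have hπ := Real.pi_pos
  rcases eq_or_lt_of_le hn with h1 | hn2
  · -- n = 1 : trivial
    intro j j' i
    have hss : Subsingleton (Fin n) := by rw [← h1]; infer_instance
    rw [Subsingleton.elim j j']
  -- n ≥ 2
  have hn0 : (0:ℝ) < (n:ℝ) := by positivity
  have hn2R : (2:ℝ) ≤ (n:ℝ) := by exact_mod_cast hn2
  have hW : ∀ i j, W i j = W j i := by
    intro i j
    have := congrFun (congrFun hWsymm j) i
    simpa [Matrix.transpose_apply] using this
  have hu : ∀ j, X 0 j ^ 2 + X 1 j ^ 2 = 1 := by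
    intro j; have := hX j; rwa [Fin.sum_univ_two] at this
  have hcc : ∀ i j, (Xᵀ * X) i j = X 0 i * X 0 j + X 1 i * X 1 j := by
    intro i j; rw [Matrix.mul_apply, Fin.sum_univ_two]; rfl
  have hcsym : ∀ i j, (Xᵀ * X) i j = (Xᵀ * X) j i := by
    intro i j; rw [hcc, hcc]; ring
  have hstar := star_ineq W hW d1 d2 X hu hhess
  -- angles ψ_j ∈ [0, 2π)
  choose ψ hψ0 hψ2 hψcos hψsin using fun j => exists_angle (X 0 j) (X 1 j) (hu j)
  -- pigeonhole: an empty half-open arc [k*a, (k+1)*a) with a = 2π/(n+1)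
  set a : ℝ := 2 * Real.pi / ((n:ℝ) + 1) with ha_def
  have ha : 0 < a := by positivity
  have hna : ((n:ℝ) + 1) * a = 2 * Real.pi := by
    rw [ha_def]; field_simp
  obtain ⟨k, hk1, hknot⟩ : ∃ k ∈ Finset.range (n+1),
      k ∉ Finset.image (fun j => ⌊ψ j / a⌋₊) Finset.univ := by
    by_contra hcon
    push_neg at hcon
    have hsub : Finset.range (n+1) ⊆ Finset.image (fun j => ⌊ψ j / a⌋₊) Finset.univ :=
      fun k hk => hcon k hk
    have h1 := Finset.card_le_card hsub
    have h2 := Finset.card_image_le (f := fun j => ⌊ψ j / a⌋₊)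
      (s := (Finset.univ : Finset (Fin n)))
    simp only [Finset.card_range, Finset.card_univ, Fintype.card_fin] at h1 h2
    omega
  rw [Finset.mem_range] at hk1
  have hgapd : ∀ j, ψ j < (k:ℝ) * a ∨ ((k:ℝ) + 1) * a ≤ ψ j := by
    intro j
    rcases lt_or_ge (ψ j) ((k:ℝ) * a) with h | h
    · exact Or.inl h
    · right
      by_contra hlt
      push_neg at hlt
      have hfl : ⌊ψ j / a⌋₊ = k := by
        rw [Nat.floor_eq_iff (div_nonneg (hψ0 j) ha.le)]
        constructor
        · rw [le_div_iff₀ ha]; linarith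
        · rw [div_lt_iff₀ ha]; linarith
      exact hknot (Finset.mem_image.mpr ⟨j, Finset.mem_univ j, hfl⟩)
  -- lifted angles θ
  set θ : Fin n → ℝ := fun j => if ((k:ℝ) + 1) * a ≤ ψ j then ψ j - 2 * Real.pi else ψ j
    with hθ_def
  have hka : ((k:ℝ) + 1) * a ≤ 2 * Real.pi := by
    rw [← hna]
    have hkn : k ≤ n := by omega
    have : (k:ℝ) + 1 ≤ (n:ℝ) + 1 := by
      have : (k:ℝ) ≤ (n:ℝ) := by exact_mod_cast hkn
      linarith
    nlinarith
  have hθmem : ∀ j, ((k:ℝ) + 1) * a - 2 * Real.pi ≤ θ j ∧ θ j ≤ (k:ℝ) * a := by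
    intro j
    simp only [hθ_def]
    split_ifs with h
    · constructor
      · linarith
      · have : 0 ≤ (k:ℝ) * a := by positivity
        linarith [hψ2 j]
    · rcases hgapd j with h2 | h2
      · exact ⟨by linarith [hψ0 j], h2.le⟩
      · exact absurd h2 h
  have hθcos : ∀ j, X 0 j = Real.cos (θ j) := by
    intro j
    simp only [hθ_def]
    split_ifs with h
    · rw [Real.cos_sub_two_pi]; exact hψcos j
    · exact hψcos j
  have hθsin : ∀ j, X 1 j = Real.sin (θ j) := by
    intro j
    simp only [hθ_def]
    split_ifs with h
    · rw [Real.sin_sub_two_pi]; exact hψsin j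
    · exact hψsin j
  have hspan0 : ∀ i j, |θ i - θ j| < 2 * Real.pi - Real.pi / n := by
    intro i j
    have h1 := hθmem i
    have h2 := hθmem j
    have haπ : Real.pi / n < a := by
      rw [ha_def, div_lt_div_iff₀ hn0 (by positivity)]
      nlinarith
    rw [abs_lt]
    constructor <;> nlinarith [h1.1, h1.2, h2.1, h2.2]
  have hccos : ∀ i j, (Xᵀ * X) i j = Real.cos (θ i - θ j) := by
    intro i j
    rw [hcc, hθcos i, hθcos j, hθsin i, hθsin j, ← Real.cos_sub]
  have hcbound : ∀ i j, -1 ≤ (Xᵀ * X) i j ∧ (Xᵀ * X) i j ≤ 1 := by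
    intro i j
    rw [hccos]
    exact ⟨Real.neg_one_le_cos _, Real.cos_le_one _⟩
  have hδ0 : 0 < Real.pi / n := by positivity
  have hδπ : Real.pi / n ≤ Real.pi := by
    rw [div_le_iff₀ hn0]; nlinarith
  -- the two graphs
  set H : SimpleGraph (Fin n) :=
    SimpleGraph.fromRel (fun i j => 0 < W i j ∧ 0 ≤ hfun d1 d2 ((Xᵀ * X) i j)) with hH_def
  have hconn' : (SimpleGraph.fromRel fun i j => 0 < W i j).Connected := hconn
  -- H is connected, via the Hessian inequality
  have hHreach : ∀ u v, H.Reachable u v := by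
    intro u v
    by_contra hreach
    set S : Set (Fin n) := {x | H.Reachable u x} with hS_def
    have huS : u ∈ S := SimpleGraph.Reachable.refl u
    have hclosed : ∀ x ∈ S, ∀ y, (SimpleGraph.fromRel fun i j => 0 < W i j).Adj x y → y ∈ S := by
      intro x hx y hxy
      by_contra hy
      have hxS : H.Reachable u x := hx
      obtain ⟨hne, hor⟩ := (SimpleGraph.fromRel_adj _ x y).mp hxy
      have hxyW : 0 < W x y := by
        rcases hor with h | h
        · exact h
        · rw [hW x y]; exact h
      have hh : hfun d1 d2 ((Xᵀ * X) x y) < 0 := by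
        by_contra hge
        push_neg at hge
        have hadj : H.Adj x y :=
          (SimpleGraph.fromRel_adj _ x y).mpr ⟨hne, Or.inl ⟨hxyW, hge⟩⟩
        exact hy (hxS.trans hadj.reachable)
      -- indicator test vector
      set α : Fin n → ℝ := fun z => if z ∈ S then 1 else 0 with hα_def
      have hcross : ∀ p q : Fin n, p ∈ S → q ∉ S → 0 < W p q →
          hfun d1 d2 ((Xᵀ * X) p q) < 0 := by
        intro p q hp hq hw
        by_contra hge
        push_neg at hge
        have hne2 : p ≠ q := fun h => hq (h ▸ hp)
        have hadj : H.Adj p q :=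
          (SimpleGraph.fromRel_adj _ p q).mpr ⟨hne2, Or.inl ⟨hw, hge⟩⟩
        have hpS : H.Reachable u p := hp
        exact hq (hpS.trans hadj.reachable)
      have hterm : ∀ p q : Fin n,
          W p q * hfun d1 d2 ((Xᵀ * X) p q) * (α p - α q)^2 ≤ 0 := by
        intro p q
        by_cases hp : p ∈ S <;> by_cases hq : q ∈ S
        · simp [hα_def, hp, hq]
        · rcases (hWnonneg p q).lt_or_eq with hw | hw
          · have := hcross p q hp hq hw
            have h1 : (α p - α q)^2 = 1 := by simp [hα_def, hp, hq]
            rw [h1, mul_one]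
            exact (mul_neg_of_pos_of_neg hw this).le
          · rw [← hw]; simp
        · rcases (hWnonneg p q).lt_or_eq with hw | hw
          · have hw' : 0 < W q p := by rw [hW q p]; exact hw
            have := hcross q p hq hp hw'
            have h1 : (α p - α q)^2 = 1 := by simp [hα_def, hp, hq]
            rw [h1, mul_one]
            have h2 : hfun d1 d2 ((Xᵀ * X) p q) < 0 := by
              rw [hcsym p q]; exact this
            exact (mul_neg_of_pos_of_neg hw h2).le
          · rw [← hw]; simp
        · simp [hα_def, hp, hq]
      have hxyneg : W x y * hfun d1 d2 ((Xᵀ * X) x y) * (α x - α y)^2 < 0 := by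
        have h1 : (α x - α y)^2 = 1 := by simp [hα_def, hx, hy]
        rw [h1, mul_one]
        exact mul_neg_of_pos_of_neg hxyW hh
      have hsumneg : ∑ i, ∑ j, W i j * hfun d1 d2 ((Xᵀ * X) i j) * (α i - α j)^2 < 0 := by
        have houter : ∀ i, ∑ j, W i j * hfun d1 d2 ((Xᵀ * X) i j) * (α i - α j)^2 ≤ 0 :=
          fun i => Finset.sum_nonpos fun j _ => hterm i j
        have hinner : ∑ j, W x j * hfun d1 d2 ((Xᵀ * X) x j) * (α x - α j)^2 < 0 := by
          have := Finset.sum_lt_sum (f := fun j => W x j * hfun d1 d2 ((Xᵀ * X) x j) * (α x - α j)^2)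
            (g := fun _ => (0:ℝ)) (fun j _ => hterm x j) ⟨y, Finset.mem_univ y, hxyneg⟩
          simpa using this
        have := Finset.sum_lt_sum (f := fun i => ∑ j, W i j * hfun d1 d2 ((Xᵀ * X) i j) * (α i - α j)^2)
          (g := fun _ => (0:ℝ)) (fun i _ => houter i) ⟨x, Finset.mem_univ x, hinner⟩
        simpa using this
      exact absurd (hstar α) (not_le.mpr hsumneg)
    exact hreach (conn_closure hconn' S hclosed huS v)
  -- H-edges are short
  have hshort : ∀ p q, H.Adj p q → |θ p - θ q| ≤ Real.pi / n := by
    intro p q hpq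
    obtain ⟨hne, hor⟩ := (SimpleGraph.fromRel_adj _ p q).mp hpq
    have hh : 0 ≤ hfun d1 d2 ((Xᵀ * X) p q) := by
      rcases hor with ⟨_, h⟩ | ⟨_, h⟩
      · exact h
      · rw [hcsym p q]; exact h
    have hcge : Real.cos (Real.pi / n) ≤ (Xᵀ * X) p q := by
      by_contra hlt
      push_neg at hlt
      have := hcond ((Xᵀ * X) p q) (hcbound p q).1 hlt
      unfold hfun at hh
      linarith
    exact abs_le_of_cos_ge hδ0 hδπ (hspan0 p q) (by rw [← hccos]; exact hcge)
  -- span bound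
  have hspan : ∀ p q, |θ p - θ q| ≤ ((n:ℝ) - 1) * (Real.pi / n) := by
    intro p q
    obtain ⟨w⟩ := hHreach p q
    have hb := walk_theta_bound θ (Real.pi / n) hshort w.bypass
    have hlen : w.bypass.length ≤ n - 1 := by
      have := w.bypass_isPath.length_lt
      simp only [Fintype.card_fin] at this
      omega
    refine hb.trans ?_
    apply mul_le_mul_of_nonneg_right _ hδ0.le
    have : ((w.bypass.length : ℕ) : ℝ) ≤ ((n - 1 : ℕ) : ℝ) := by exact_mod_cast hlen
    refine this.trans ?_
    rw [Nat.cast_sub hn]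
    simp
  have hspanpi : ∀ p q, |θ p - θ q| < Real.pi := by
    intro p q
    refine lt_of_le_of_lt (hspan p q) ?_
    have h1 : ((n:ℝ) - 1) * (Real.pi / n) = Real.pi - Real.pi / n := by
      field_simp
    rw [h1]
    linarith
  -- criticality in angle form
  have hcritθ : ∀ j, ∑ kk, Real.sin (θ kk - θ j) * (W kk j * d1 ((Xᵀ * X) kk j)) = 0 := by
    intro j
    have hce := crit_eq W d1 X hcrit j
    rw [← hce]
    refine Finset.sum_congr rfl fun kk _ => ?_
    rw [Real.sin_sub, hθcos j, hθcos kk, hθsin j, hθsin kk]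
    ring_nf
  -- argmax argument
  obtain ⟨j0, -, hj0⟩ := Finset.exists_max_image Finset.univ θ ⟨⟨0, by omega⟩, Finset.mem_univ _⟩
  set M : Set (Fin n) := {p | θ p = θ j0} with hM_def
  have hMclosed : ∀ p ∈ M, ∀ q, (SimpleGraph.fromRel fun i j => 0 < W i j).Adj p q → q ∈ M := by
    intro p hp q hpq
    have hpθ : θ p = θ j0 := hp
    obtain ⟨hne, hor⟩ := (SimpleGraph.fromRel_adj _ p q).mp hpq
    have hWqp : 0 < W q p := by
      rcases hor with h | h
      · rw [hW q p]; exact h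
      · exact h
    have hterm : ∀ kk, Real.sin (θ kk - θ p) * (W kk p * d1 ((Xᵀ * X) kk p)) ≤ 0 := by
      intro kk
      have hsin : Real.sin (θ kk - θ p) ≤ 0 := by
        apply sin_nonpos_neg
        · have := hspanpi kk p
          rw [abs_lt] at this
          linarith [this.1]
        · have := hj0 kk (Finset.mem_univ kk)
          linarith [hpθ ▸ this]
      have hd1 : 0 < d1 ((Xᵀ * X) kk p) :=
        hd1pos _ ⟨(hcbound kk p).1, (hcbound kk p).2⟩
      exact mul_nonpos_of_nonpos_of_nonneg hsin
        (mul_nonneg (hWnonneg kk p) hd1.le)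
    have hall := (Finset.sum_eq_zero_iff_of_nonpos (fun kk _ => hterm kk)).mp (hcritθ p)
    have hq0 := hall q (Finset.mem_univ q)
    have hpos : 0 < W q p * d1 ((Xᵀ * X) q p) :=
      mul_pos hWqp (hd1pos _ ⟨(hcbound q p).1, (hcbound q p).2⟩)
    have hsin0 : Real.sin (θ q - θ p) = 0 :=
      (mul_eq_zero.mp hq0).resolve_right (ne_of_gt hpos)
    have hzero : θ q - θ p = 0 := by
      apply eq_zero_of_sin_zero _ _ hsin0
      · have := hspanpi q p
        rw [abs_lt] at this
        linarith [this.1]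
      · have := hj0 q (Finset.mem_univ q)
        linarith [hpθ ▸ this]
    show θ q = θ j0
    linarith [hpθ]
  have hj0M : j0 ∈ M := rfl
  have hMall : ∀ p, p ∈ M := conn_closure hconn' M hMclosed hj0M
  -- conclude
  intro j j' i
  have hθeq : θ j = θ j' := by
    have h1 : θ j = θ j0 := hMall j
    have h2 : θ j' = θ j0 := hMall j'
    rw [h1, h2]
  fin_cases i
  · show X 0 j = X 0 j'
    rw [hθcos j, hθcos j', hθeq]
  · show X 1 j = X 1 j'
    rw [hθsin j, hθsin j', hθeq]
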